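/- Let X be a compact metric space, A a unital C*-algebra with tracial states, and φ : C(X) → A a unital *-homomorphism. Let G ⊆ X be an open set such that the boundary measure μ_τ(closure(G) \ G) = 0 for every tracial state τ of A, where μ_τ is the Borel measure on X induced by τ∘φ. Then for every ε > 0 there exists f ∈ C(X) with 0 ≤ f ≤ 1, f vanishing on X \ G, such that |τ(φ(f)) − μ_τ(G)| < ε for all τ ∈ T(A). -/

import Mathlib

open MeasureTheory

/-- A tracial state on a unital C*-algebra. -/
def IsTracialState {A : Type*} [NormedRing A] [StarRing A] [NormedAlgebra ℂ A]
    (τ : A →L[ℂ] ℂ) : Prop :=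
  τ 1 = 1 ∧ (∀ a : A, 0 ≤ (τ (star a * a)).re ∧ (τ (star a * a)).im = 0) ∧
    ∀ x y : A, τ (x * y) = τ (y * x)

section Aux

variable {A : Type*} [CStarAlgebra A] [PartialOrder A] [StarOrderedRing A]

lemma tracial_algebraMap {τ : A →L[ℂ] ℂ} (h1 : τ 1 = 1) (z : ℂ) :
    τ (algebraMap ℂ A z) = z := by
  rw [Algebra.algebraMap_eq_smul_one, _root_.map_smul, h1, smul_eq_mul, mul_one]

lemma tracial_nonneg {τ : A →L[ℂ] ℂ} (hτ : IsTracialState τ) {a : A} (ha : 0 ≤ a) :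
    (τ a).im = 0 ∧ 0 ≤ (τ a).re := by
  rw [StarOrderedRing.nonneg_iff] at ha
  induction ha using AddSubmonoid.closure_induction with
  | mem x hx =>
    obtain ⟨s, rfl⟩ := hx
    exact ⟨(hτ.2.1 s).2, (hτ.2.1 s).1⟩
  | zero => simp
  | add x y _ _ hx hy =>
    refine ⟨?_, ?_⟩
    · rw [map_add, Complex.add_im, hx.1, hy.1, add_zero]
    · rw [map_add, Complex.add_re]
      exact add_nonneg hx.2 hy.2

lemma tracial_selfAdjoint {τ : A →L[ℂ] ℂ} (hτ : IsTracialState τ) {a : A}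
    (ha : IsSelfAdjoint a) : (τ a).im = 0 ∧ |(τ a).re| ≤ ‖a‖ := by
  have key : ∀ r : ℝ, τ (algebraMap ℝ A r) = (r : ℂ) := by
    intro r
    rw [IsScalarTower.algebraMap_apply ℝ ℂ A, tracial_algebraMap hτ.1]
    rfl
  have h1 := tracial_nonneg hτ (sub_nonneg.mpr ha.le_algebraMap_norm_self)
  have h2 := tracial_nonneg hτ (sub_nonneg.mpr ha.neg_algebraMap_norm_le_self)
  rw [map_sub, key] at h1
  rw [map_sub, map_neg, key] at h2
  simp only [Complex.sub_im, Complex.ofReal_im, Complex.sub_re, Complex.ofReal_re,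
    Complex.neg_im, Complex.neg_re, zero_sub, neg_eq_zero, sub_nonneg, sub_neg_eq_add,
    Complex.add_im, Complex.add_re] at h1 h2
  refine ⟨h1.1, abs_le.mpr ⟨?_, ?_⟩⟩
  · linarith [h2.2]
  · linarith [h1.2]

lemma tracial_norm_apply_le {τ : A →L[ℂ] ℂ} (hτ : IsTracialState τ) (a : A) :
    ‖τ a‖ ≤ 2 * ‖a‖ := by
  have hre : ∀ b : A, IsSelfAdjoint b → ‖τ b‖ ≤ ‖b‖ := by
    intro b hb
    obtain ⟨him, hrb⟩ := tracial_selfAdjoint hτ hb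
    calc ‖τ b‖ = |(τ b).re| := by
          rw [Complex.norm_def, Complex.normSq_apply, him]
          simp [Real.sqrt_mul_self_eq_abs]
      _ ≤ ‖b‖ := hrb
  have hdecomp : a = (realPart a : A) + Complex.I • (imaginaryPart a : A) :=
    (realPart_add_I_smul_imaginaryPart a).symm
  have hnr : ‖(realPart a : A)‖ ≤ ‖a‖ := by
    rw [realPart_apply_coe]
    calc ‖(2:ℝ)⁻¹ • (a + star a)‖ = (2:ℝ)⁻¹ * ‖a + star a‖ := by
          rw [norm_smul]; simp
      _ ≤ (2:ℝ)⁻¹ * (‖a‖ + ‖star a‖) := by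
          gcongr; exact norm_add_le _ _
      _ = ‖a‖ := by rw [norm_star]; ring
  have hni : ‖(imaginaryPart a : A)‖ ≤ ‖a‖ := by
    rw [imaginaryPart_apply_coe]
    calc ‖(-Complex.I) • ((2:ℝ)⁻¹ • (a - star a))‖ = ‖(2:ℝ)⁻¹ • (a - star a)‖ := by
          rw [norm_smul]; simp
      _ = (2:ℝ)⁻¹ * ‖a - star a‖ := by rw [norm_smul]; simp
      _ ≤ (2:ℝ)⁻¹ * (‖a‖ + ‖star a‖) := by gcongr; exact norm_sub_le _ _
      _ = ‖a‖ := by rw [norm_star]; ring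
  calc ‖τ a‖ = ‖τ ((realPart a : A)) + Complex.I * τ ((imaginaryPart a : A))‖ := by
        conv_lhs => rw [hdecomp]
        rw [map_add, _root_.map_smul, smul_eq_mul]
    _ ≤ ‖τ ((realPart a : A))‖ + ‖Complex.I * τ ((imaginaryPart a : A))‖ := norm_add_le _ _
    _ ≤ ‖a‖ + ‖a‖ := by
        refine add_le_add ((hre _ (realPart a).2).trans hnr) ?_
        rw [norm_mul, Complex.norm_I, one_mul]
        exact (hre _ (imaginaryPart a).2).trans hni
    _ = 2 * ‖a‖ := by ring

end Aux

section Compactness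

variable {A : Type*} [CStarAlgebra A] [PartialOrder A] [StarOrderedRing A]

lemma isClosed_tracialStates :
    IsClosed {τ' : WeakDual ℂ A | IsTracialState (WeakDual.toStrongDual τ')} := by
  have heq : {τ' : WeakDual ℂ A | IsTracialState (WeakDual.toStrongDual τ')} =
      ({τ' : WeakDual ℂ A | τ' 1 = 1} ∩
        ((⋂ a : A, ({τ' : WeakDual ℂ A | 0 ≤ (τ' (star a * a)).re} ∩
          {τ' : WeakDual ℂ A | (τ' (star a * a)).im = 0})) ∩
        ⋂ x : A, ⋂ y : A, {τ' : WeakDual ℂ A | τ' (x * y) = τ' (y * x)})) := by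
    ext τ'
    simp only [IsTracialState, Set.mem_setOf_eq, Set.mem_inter_iff, Set.mem_iInter,
      WeakDual.toStrongDual_apply]

  rw [heq]
  refine IsClosed.inter (isClosed_eq (WeakDual.eval_continuous 1) continuous_const)
    (IsClosed.inter ?_ ?_)
  · exact isClosed_iInter fun a => IsClosed.inter
      (isClosed_le continuous_const (Complex.continuous_re.comp (WeakDual.eval_continuous _)))
      (isClosed_eq (Complex.continuous_im.comp (WeakDual.eval_continuous _)) continuous_const)
  · exact isClosed_iInter fun x => isClosed_iInter fun y =>
      isClosed_eq (WeakDual.eval_continuous _) (WeakDual.eval_continuous _)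

lemma isCompact_tracialStates :
    IsCompact {τ' : WeakDual ℂ A | IsTracialState (WeakDual.toStrongDual τ')} := by
  refine IsCompact.of_isClosed_subset (WeakDual.isCompact_closedBall (0 : StrongDual ℂ A) 2)
    isClosed_tracialStates ?_
  intro τ' hτ'
  simp only [Set.mem_preimage, Metric.mem_closedBall, dist_zero_right]
  exact ContinuousLinearMap.opNorm_le_bound _ (by norm_num) fun a =>
    tracial_norm_apply_le hτ' a

end Compactness

open Filter in
theorem stmt5 {X : Type*} [MetricSpace X] [CompactSpace X] [MeasurableSpace X] [BorelSpace X]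
    {A : Type*} [NormedRing A] [StarRing A] [CStarRing A] [NormedAlgebra ℂ A] [CompleteSpace A]
    [StarModule ℂ A]
    (φ : C(X, ℂ) →⋆ₐ[ℂ] A) (hinj : Function.Injective φ)
    (μt : (A →L[ℂ] ℂ) → Measure X)
    (hrep : ∀ τ : A →L[ℂ] ℂ, IsTracialState τ → IsProbabilityMeasure (μt τ) ∧
      ∀ f : C(X, ℂ), τ (φ f) = ∫ x, f x ∂(μt τ))
    (G : Set X) (hG : IsOpen G)
    (hbd : ∀ τ : A →L[ℂ] ℂ, IsTracialState τ → μt τ (closure G \ G) = 0) :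
    ∀ ε : ℝ, 0 < ε → ∃ g : C(X, ℂ),
      (∀ x, (g x).im = 0 ∧ 0 ≤ (g x).re ∧ (g x).re ≤ 1) ∧
      (∀ x, x ∉ G → g x = 0) ∧
      ∀ τ : A →L[ℂ] ℂ, IsTracialState τ →
        ‖τ (φ g) - ((μt τ) G).toReal‖ < ε := by
  intro ε hε
  classical
  letI : CStarAlgebra A := { }
  letI : PartialOrder A := CStarAlgebra.spectralOrder A
  letI : StarOrderedRing A := CStarAlgebra.spectralOrderedRing A
  by_cases hGe : G = ∅
  · refine ⟨0, by simp, fun x _ => rfl, fun τ hτ => ?_⟩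
    have h0 : φ (0 : C(X, ℂ)) = 0 := map_zero φ
    simp [h0, hGe, hε]
  by_cases hGu : G = Set.univ
  · refine ⟨1, by simp, fun x hx => absurd (by simp [hGu]) hx, fun τ hτ => ?_⟩
    have h1 : φ (1 : C(X, ℂ)) = 1 := map_one φ
    haveI := (hrep τ hτ).1
    simp [h1, hτ.1, hGu, hε]
  -- main case
  have hGc : (Gᶜ).Nonempty := Set.nonempty_compl.mpr hGu
  have hclne : (closure G).Nonempty := (Set.nonempty_iff_ne_empty.mpr hGe).closure
  set gR : ℕ → X → ℝ := fun n x => min 1 (n * Metric.infDist x Gᶜ) with hgRdef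
  set hR : ℕ → X → ℝ := fun n x => min 1 (n * Metric.infDist x (closure G)) with hhRdef
  have cg : ∀ n, Continuous (gR n) := fun n =>
    continuous_const.min (continuous_const.mul (Metric.continuous_infDist_pt _))
  have ch : ∀ n, Continuous (hR n) := fun n =>
    continuous_const.min (continuous_const.mul (Metric.continuous_infDist_pt _))
  have gR_nonneg : ∀ n x, 0 ≤ gR n x := fun n x =>
    le_min zero_le_one (mul_nonneg (Nat.cast_nonneg n) Metric.infDist_nonneg)
  have gR_le_one : ∀ n x, gR n x ≤ 1 := fun n x => min_le_left _ _
  have hR_nonneg : ∀ n x, 0 ≤ hR n x := fun n x =>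
    le_min zero_le_one (mul_nonneg (Nat.cast_nonneg n) Metric.infDist_nonneg)
  have hR_le_one : ∀ n x, hR n x ≤ 1 := fun n x => min_le_left _ _
  have gR_zero : ∀ n x, x ∉ G → gR n x = 0 := by
    intro n x hx
    simp [hgRdef, Metric.infDist_zero_of_mem (Set.mem_compl hx)]
  have hR_zero : ∀ n x, x ∈ closure G → hR n x = 0 := by
    intro n x hx
    simp [hhRdef, Metric.infDist_zero_of_mem hx]
  have gR_mono : ∀ x, Monotone fun n => gR n x := fun x m n hmn =>
    min_le_min le_rfl
      (mul_le_mul_of_nonneg_right (by exact_mod_cast hmn) Metric.infDist_nonneg)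
  have hR_mono : ∀ x, Monotone fun n => hR n x := fun x m n hmn =>
    min_le_min le_rfl
      (mul_le_mul_of_nonneg_right (by exact_mod_cast hmn) Metric.infDist_nonneg)
  have gR_lim : ∀ x, Tendsto (fun n => gR n x) atTop
      (nhds (Set.indicator G (1 : X → ℝ) x)) := by
    intro x
    by_cases hx : x ∈ G
    · rw [Set.indicator_of_mem hx]
      have hd : 0 < Metric.infDist x Gᶜ :=
        (hG.isClosed_compl.notMem_iff_infDist_pos hGc).mp (by simpa using hx)
      have hev : (fun _ : ℕ => (1 : ℝ)) =ᶠ[atTop] fun n => gR n x := by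
        obtain ⟨N, hN⟩ := exists_nat_gt (1 / Metric.infDist x Gᶜ)
        filter_upwards [eventually_ge_atTop N] with n hn
        have h1 : 1 / Metric.infDist x Gᶜ < (n : ℝ) :=
          lt_of_lt_of_le hN (by exact_mod_cast hn)
        rw [div_lt_iff₀ hd] at h1
        exact (min_eq_left h1.le).symm
      exact Tendsto.congr' hev tendsto_const_nhds
    · rw [Set.indicator_of_notMem hx]
      exact Tendsto.congr'
        (Filter.Eventually.of_forall fun n => (gR_zero n x hx).symm) tendsto_const_nhds
  have hR_lim : ∀ x, Tendsto (fun n => hR n x) atTop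
      (nhds (Set.indicator (closure G)ᶜ (1 : X → ℝ) x)) := by
    intro x
    by_cases hx : x ∈ closure G
    · rw [Set.indicator_of_notMem (by simpa using hx)]
      exact Tendsto.congr'
        (Filter.Eventually.of_forall fun n => (hR_zero n x hx).symm) tendsto_const_nhds
    · rw [Set.indicator_of_mem (by simpa using hx)]
      have hd : 0 < Metric.infDist x (closure G) :=
        (isClosed_closure.notMem_iff_infDist_pos hclne).mp hx
      have hev : (fun _ : ℕ => (1 : ℝ)) =ᶠ[atTop] fun n => hR n x := by
        obtain ⟨N, hN⟩ := exists_nat_gt (1 / Metric.infDist x (closure G))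
        filter_upwards [eventually_ge_atTop N] with n hn
        have h1 : 1 / Metric.infDist x (closure G) < (n : ℝ) :=
          lt_of_lt_of_le hN (by exact_mod_cast hn)
        rw [div_lt_iff₀ hd] at h1
        exact (min_eq_left h1.le).symm
      exact Tendsto.congr' hev tendsto_const_nhds
  -- integrability
  have int_g : ∀ τ, IsTracialState τ → ∀ n, Integrable (gR n) (μt τ) := by
    intro τ hτ n
    haveI := (hrep τ hτ).1
    exact (cg n).integrable_of_hasCompactSupport (HasCompactSupport.of_compactSpace _)
  have int_h : ∀ τ, IsTracialState τ → ∀ n, Integrable (hR n) (μt τ) := by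
    intro τ hτ n
    haveI := (hrep τ hτ).1
    exact (ch n).integrable_of_hasCompactSupport (HasCompactSupport.of_compactSpace _)
  -- measure arithmetic
  have hsum : ∀ τ, IsTracialState τ →
      (μt τ G).toReal + (μt τ (closure G)ᶜ).toReal = 1 := by
    intro τ hτ
    haveI := (hrep τ hτ).1
    have hμcl : μt τ (closure G) = μt τ G :=
      le_antisymm
        (by
          calc μt τ (closure G) = μt τ (G ∪ closure G \ G) := by
                rw [Set.union_diff_cancel subset_closure]
            _ ≤ μt τ G + μt τ (closure G \ G) := measure_union_le _ _
            _ = μt τ G := by rw [hbd τ hτ, add_zero])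
        (measure_mono subset_closure)
    rw [← ENNReal.toReal_add (measure_ne_top _ _) (measure_ne_top _ _), ← hμcl,
      measure_add_measure_compl isClosed_closure.measurableSet, measure_univ,
      ENNReal.toReal_one]
  -- convergence of integrals
  have tend : ∀ τ, IsTracialState τ →
      Tendsto (fun n => (∫ x, gR n x ∂(μt τ)) + ∫ x, hR n x ∂(μt τ)) atTop (nhds 1) := by
    intro τ hτ
    haveI := (hrep τ hτ).1
    have tg : Tendsto (fun n => ∫ x, gR n x ∂(μt τ)) atTop
        (nhds (∫ x, Set.indicator G (1 : X → ℝ) x ∂(μt τ))) :=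
      tendsto_integral_of_dominated_convergence (fun _ => (1 : ℝ))
        (fun n => (cg n).aestronglyMeasurable) (integrable_const 1)
        (fun n => Filter.Eventually.of_forall fun x => by
          rw [Real.norm_eq_abs, abs_of_nonneg (gR_nonneg n x)]; exact gR_le_one n x)
        (Filter.Eventually.of_forall gR_lim)
    have th : Tendsto (fun n => ∫ x, hR n x ∂(μt τ)) atTop
        (nhds (∫ x, Set.indicator (closure G)ᶜ (1 : X → ℝ) x ∂(μt τ))) :=
      tendsto_integral_of_dominated_convergence (fun _ => (1 : ℝ))
        (fun n => (ch n).aestronglyMeasurable) (integrable_const 1)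
        (fun n => Filter.Eventually.of_forall fun x => by
          rw [Real.norm_eq_abs, abs_of_nonneg (hR_nonneg n x)]; exact hR_le_one n x)
        (Filter.Eventually.of_forall hR_lim)
    rw [integral_indicator_one hG.measurableSet] at tg
    rw [integral_indicator_one isClosed_closure.measurableSet.compl] at th
    have := tg.add th
    rwa [measureReal_def, measureReal_def, hsum τ hτ] at this
  -- the continuous maps
  have hval : ∀ (f : X → ℝ) (hf : Continuous f) (τ : A →L[ℂ] ℂ), IsTracialState τ →
      τ (φ ⟨fun x => ((f x : ℝ) : ℂ), Complex.continuous_ofReal.comp hf⟩) =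
        ((∫ x, f x ∂(μt τ) : ℝ) : ℂ) := by
    intro f hf τ hτ
    rw [(hrep τ hτ).2]
    simp only [ContinuousMap.coe_mk]
    exact integral_ofReal
  set q : ℕ → C(X, ℂ) := fun n =>
    ⟨fun x => ((gR n x + hR n x : ℝ) : ℂ),
      Complex.continuous_ofReal.comp ((cg n).add (ch n))⟩ with hqdef
  have hq : ∀ τ, IsTracialState τ → ∀ n,
      τ (φ (q n)) = (((∫ x, gR n x ∂(μt τ)) + ∫ x, hR n x ∂(μt τ) : ℝ) : ℂ) := by
    intro τ hτ n
    have := hval (fun x => gR n x + hR n x) ((cg n).add (ch n)) τ hτ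
    rw [this, integral_add (int_g τ hτ n) (int_h τ hτ n)]
  -- compactness cover
  set S := {τ' : WeakDual ℂ A | IsTracialState (WeakDual.toStrongDual τ')} with hS
  set U : ℕ → Set (WeakDual ℂ A) := fun n => {τ' | 1 - ε / 2 < (τ' (φ (q n))).re} with hU
  have hUopen : ∀ n, IsOpen (U n) := fun n =>
    isOpen_lt continuous_const (Complex.continuous_re.comp (WeakDual.eval_continuous _))
  have hcover : S ⊆ ⋃ n, U n := by
    intro τ' hτ'
    have hτ : IsTracialState (WeakDual.toStrongDual τ') := hτ'
    have hev : ∀ᶠ n in atTop,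
        1 - ε / 2 < (∫ x, gR n x ∂(μt _)) + ∫ x, hR n x ∂(μt _) :=
      (tend _ hτ).eventually (eventually_gt_nhds (by linarith))
    obtain ⟨n, hn⟩ := hev.exists
    refine Set.mem_iUnion.mpr ⟨n, ?_⟩
    have heval : τ' (φ (q n)) = (WeakDual.toStrongDual τ') (φ (q n)) := rfl
    simp only [hU, Set.mem_setOf_eq, heval, hq _ hτ n, Complex.ofReal_re]
    exact hn
  obtain ⟨t, ht⟩ := isCompact_tracialStates.elim_finite_subcover U hUopen hcover
  set N := t.sup id with hNdef
  refine ⟨⟨fun x => ((gR N x : ℝ) : ℂ), Complex.continuous_ofReal.comp (cg N)⟩,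
    fun x => by simp [gR_nonneg N x, gR_le_one N x], fun x hx => by simp [gR_zero N x hx],
    fun τ hτ => ?_⟩
  haveI := (hrep τ hτ).1
  have hmem : StrongDual.toWeakDual τ ∈ S := hτ
  obtain ⟨n, hnt, hn⟩ := Set.mem_iUnion₂.mp (ht hmem)
  have hnN : n ≤ N := Finset.le_sup (f := id) hnt
  set r := ∫ x, gR N x ∂(μt τ) with hrdef
  set s := ∫ x, hR N x ∂(μt τ) with hsdef
  have hlow : 1 - ε / 2 < r + s := by
    have hn' : 1 - ε / 2 < (τ (φ (q n))).re := hn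
    rw [hq τ hτ n, Complex.ofReal_re] at hn'
    refine lt_of_lt_of_le hn' (add_le_add ?_ ?_)
    · exact integral_mono (int_g τ hτ n) (int_g τ hτ N) fun x => gR_mono x hnN
    · exact integral_mono (int_h τ hτ n) (int_h τ hτ N) fun x => hR_mono x hnN
  have hr_le : r ≤ (μt τ G).toReal := by
    have hle : ∀ x, gR N x ≤ Set.indicator G (1 : X → ℝ) x := by
      intro x
      by_cases hx : x ∈ G
      · simpa [Set.indicator_of_mem hx] using gR_le_one N x
      · simp [Set.indicator_of_notMem hx, gR_zero N x hx]
    calc r ≤ ∫ x, Set.indicator G (1 : X → ℝ) x ∂(μt τ) :=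
        integral_mono (int_g τ hτ N) ((integrable_const 1).indicator hG.measurableSet) hle
      _ = (μt τ G).toReal := integral_indicator_one hG.measurableSet
  have hs_le : s ≤ (μt τ (closure G)ᶜ).toReal := by
    have hle : ∀ x, hR N x ≤ Set.indicator (closure G)ᶜ (1 : X → ℝ) x := by
      intro x
      by_cases hx : x ∈ closure G
      · simp [Set.indicator_of_notMem (fun h => h hx : x ∉ (closure G)ᶜ), hR_zero N x hx]
      · simpa [Set.indicator_of_mem (by simpa using hx : x ∈ (closure G)ᶜ)] using hR_le_one N x
    calc s ≤ ∫ x, Set.indicator (closure G)ᶜ (1 : X → ℝ) x ∂(μt τ) :=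
        integral_mono (int_h τ hτ N)
          ((integrable_const 1).indicator isClosed_closure.measurableSet.compl) hle
      _ = (μt τ (closure G)ᶜ).toReal := integral_indicator_one isClosed_closure.measurableSet.compl
  have hτg := hval (gR N) (cg N) τ hτ
  rw [hτg]
  have hnorm : ‖((r : ℝ) : ℂ) - (((μt τ G).toReal : ℝ) : ℂ)‖ = |r - (μt τ G).toReal| := by
    rw [← Complex.ofReal_sub, Complex.norm_real, Real.norm_eq_abs]
  rw [hnorm, abs_of_nonpos (by linarith)]
  have := hsum τ hτ
  linarith
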